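/- Assume T_n is positive definite. For a ∈ ℝ^{n+1} with a(ζ_j) ≠ 0 for all j and Σ_{k=0}^n γ_k(a) b_k ≠ 0, define σ²(a) := ( Σ_{k=0}^n c_k a_k ) / ( Σ_{k=0}^n γ_k(a) b_k ). Then the iteration map a ↦ σ²(a) T_n^{−1} T_γ(a) b coincides with the scaled quasi-Newton step a ↦ σ²(a) [ a − (1/2) T_n^{−1} ∇𝕁_P(a) ]. -/

import Mathlib

open Finset Complex Matrix

noncomputable section

/-- The point `ζ_j = exp(iπ j / N)` of the discrete unit circle `𝕋_{2N}`. -/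
def zeta (N : ℕ) (j : ℤ) : ℂ := Complex.exp (Real.pi * Complex.I * j / N)

/-- The index set `j = -N+1, …, N`. -/
def Idx (N : ℕ) : Finset ℤ := Finset.Icc (-(N : ℤ) + 1) (N : ℤ)

/-- `a(ζ) = Σ_{k=0}^n a_k ζ^{-k}`. -/
def evC {n : ℕ} (a : Fin (n + 1) → ℝ) (z : ℂ) : ℂ :=
  ∑ k : Fin (n + 1), (a k : ℂ) * z ^ (-(k.val : ℤ))

/-- The symmetric Toeplitz matrix `T_n` with `(i,j)` entry `c_{|i-j|}`. -/
def Toep {n : ℕ} (c : Fin (n + 1) → ℝ) : Matrix (Fin (n + 1)) (Fin (n + 1)) ℝ :=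
  fun i j => c ⟨max ((i : ℕ) - (j : ℕ)) ((j : ℕ) - (i : ℕ)),
    by have := i.isLt; have := j.isLt; omega⟩

/-- `P(ζ) = b(ζ) b(ζ^{-1})`. -/
def PPd {n : ℕ} (b : Fin (n + 1) → ℝ) (z : ℂ) : ℂ := evC b z * evC b z⁻¹

/-- `𝕁_P(a) = aᵀ T_n a − (1/2N) Σ_j P(ζ_j) log( a(ζ_j) a(ζ_j^{-1}) )`. -/
def Jd (N : ℕ) {n : ℕ} (c b a : Fin (n + 1) → ℝ) : ℝ :=
  dotProduct a ((Toep c).mulVec a) -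
    (∑ j ∈ Idx N, (PPd b (zeta N j)).re *
        Real.log ((evC a (zeta N j) * evC a (zeta N j)⁻¹).re)) / (2 * N)

/-- `γ_t(a) = (1/2N) Σ_j ζ_j^t b(ζ_j)/a(ζ_j)` (a real number). -/
def gam (N : ℕ) {n : ℕ} (b a : Fin (n + 1) → ℝ) (t : ℤ) : ℝ :=
  ((∑ j ∈ Idx N, zeta N j ^ t * evC b (zeta N j) / evC a (zeta N j)) / (2 * N)).re

/-- The matrix `T_γ(a)` with `(i,j)` entry `γ_{j−i}(a)`. -/
def Tgam (N : ℕ) {n : ℕ} (b a : Fin (n + 1) → ℝ) :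
    Matrix (Fin (n + 1)) (Fin (n + 1)) ℝ :=
  fun i j => gam N b a ((j.val : ℤ) - (i.val : ℤ))

/-- `c̃_k(a) = (1/2N) Σ_j ζ_j^k P(ζ_j)/( a(ζ_j) a(ζ_j^{-1}) )` (a real number). -/
def ctil (N : ℕ) {n : ℕ} (b a : Fin (n + 1) → ℝ) (k : ℤ) : ℝ :=
  ((∑ j ∈ Idx N, zeta N j ^ k * PPd b (zeta N j) /
      (evC a (zeta N j) * evC a (zeta N j)⁻¹)) / (2 * N)).re

/-- The symmetric Toeplitz matrix `T_n(a)` with `(i,j)` entry `c̃_{|i−j|}(a)`. -/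
def TnA (N : ℕ) {n : ℕ} (b a : Fin (n + 1) → ℝ) :
    Matrix (Fin (n + 1)) (Fin (n + 1)) ℝ :=
  fun i j => ctil N b a ((max ((i : ℕ) - (j : ℕ)) ((j : ℕ) - (i : ℕ)) : ℕ) : ℤ)


/-- The gradient vector of a functional on `ℝ^{n+1}`, whose `i`-th entry is the partial
derivative in the `i`-th coordinate direction. -/
def gradVec {n : ℕ} (f : (Fin (n + 1) → ℝ) → ℝ) (a : Fin (n + 1) → ℝ) :
    Fin (n + 1) → ℝ :=
  fun i => fderiv ℝ f a (Pi.single i 1)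

def prj (n : ℕ) (k : Fin (n + 1)) : (Fin (n + 1) → ℝ) →L[ℝ] ℝ := ContinuousLinearMap.proj k

lemma prj_apply (n : ℕ) (k : Fin (n + 1)) (a : Fin (n + 1) → ℝ) : prj n k a = a k := rfl

def reL (n : ℕ) (z : ℂ) : (Fin (n + 1) → ℝ) →L[ℝ] ℝ :=
  ∑ k : Fin (n + 1), (z ^ (-(k.val : ℤ))).re • prj n k

def imL (n : ℕ) (z : ℂ) : (Fin (n + 1) → ℝ) →L[ℝ] ℝ :=
  ∑ k : Fin (n + 1), (z ^ (-(k.val : ℤ))).im • prj n k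

lemma reL_apply (n : ℕ) (z : ℂ) (a : Fin (n + 1) → ℝ) : reL n z a = (evC a z).re := by
  simp [reL, prj, evC, ContinuousLinearMap.sum_apply, Complex.re_sum, Complex.re_ofReal_mul,
    mul_comm]

lemma imL_apply (n : ℕ) (z : ℂ) (a : Fin (n + 1) → ℝ) : imL n z a = (evC a z).im := by
  simp [imL, prj, evC, ContinuousLinearMap.sum_apply, Complex.im_sum, Complex.im_ofReal_mul,
    mul_comm]

lemma zeta_eq (N : ℕ) (j : ℤ) : zeta N j = Complex.exp (((Real.pi * j / N : ℝ) : ℂ) * Complex.I) := by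
  unfold zeta; congr 1; push_cast; ring

lemma zeta_ne_zero (N : ℕ) (j : ℤ) : zeta N j ≠ 0 := Complex.exp_ne_zero _

lemma abs_zeta (N : ℕ) (j : ℤ) : ‖zeta N j‖ = 1 := by
  rw [zeta_eq]; exact Complex.norm_exp_ofReal_mul_I _

lemma zeta_inv (N : ℕ) (j : ℤ) : (zeta N j)⁻¹ = (starRingEnd ℂ) (zeta N j) :=
  Complex.inv_eq_conj (abs_zeta N j)

lemma evC_conj {n : ℕ} (a : Fin (n + 1) → ℝ) (z : ℂ) :
    evC a ((starRingEnd ℂ) z) = (starRingEnd ℂ) (evC a z) := by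
  unfold evC
  rw [map_sum]
  refine Finset.sum_congr rfl fun k _ => ?_
  rw [_root_.map_mul, Complex.conj_ofReal, map_zpow₀]

lemma evC_zeta_inv {n : ℕ} (a : Fin (n + 1) → ℝ) (N : ℕ) (j : ℤ) :
    evC a (zeta N j)⁻¹ = (starRingEnd ℂ) (evC a (zeta N j)) := by
  rw [zeta_inv, evC_conj]

lemma mul_evC_inv_re {n : ℕ} (a : Fin (n + 1) → ℝ) (N : ℕ) (j : ℤ) :
    (evC a (zeta N j) * evC a (zeta N j)⁻¹).re = Complex.normSq (evC a (zeta N j)) := by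
  rw [evC_zeta_inv, Complex.mul_conj, Complex.ofReal_re]

lemma Jd_eq (N : ℕ) {n : ℕ} (c b : Fin (n + 1) → ℝ) :
    Jd N c b = fun a =>
      (∑ p : Fin (n + 1), ∑ q : Fin (n + 1), Toep c p q * (a p * a q)) -
        (∑ j ∈ Idx N, (PPd b (zeta N j)).re *
          Real.log (reL n (zeta N j) a * reL n (zeta N j) a + imL n (zeta N j) a * imL n (zeta N j) a)) / (2 * N) := by
  funext a
  unfold Jd
  congr 1
  · unfold dotProduct Matrix.mulVec dotProduct
    rw [Finset.sum_congr rfl (fun p _ => Finset.mul_sum _ _ _)]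
    exact Finset.sum_congr rfl fun p _ => Finset.sum_congr rfl fun q _ => by ring
  · congr 1
    refine Finset.sum_congr rfl fun j _ => ?_
    rw [mul_evC_inv_re, reL_apply, imL_apply, Complex.normSq_apply]

lemma hasFDerivAt_Jd (N : ℕ) {n : ℕ} (c b : Fin (n + 1) → ℝ) (a : Fin (n + 1) → ℝ)
    (ha : ∀ j ∈ Idx N, evC a (zeta N j) ≠ 0) :
    HasFDerivAt (Jd N c b)
      ((∑ p : Fin (n + 1), ∑ q : Fin (n + 1),
          Toep c p q • (a p • prj n q + a q • prj n p)) -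
        ((2 * N : ℝ))⁻¹ • ∑ j ∈ Idx N, (PPd b (zeta N j)).re •
          ((reL n (zeta N j) a * reL n (zeta N j) a + imL n (zeta N j) a * imL n (zeta N j) a)⁻¹ •
            ((reL n (zeta N j) a • reL n (zeta N j) + reL n (zeta N j) a • reL n (zeta N j)) +
             (imL n (zeta N j) a • imL n (zeta N j) + imL n (zeta N j) a • imL n (zeta N j))))) a := by
  rw [Jd_eq]
  apply HasFDerivAt.sub
  · apply HasFDerivAt.fun_sum
    intro p _
    apply HasFDerivAt.fun_sum
    intro q _
    exact (((prj n p).hasFDerivAt (x := a)).mul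
      ((prj n q).hasFDerivAt (x := a))).const_mul _
  · have : ∀ x : ℝ, x / (2 * (N:ℝ)) = ((2 * N : ℝ))⁻¹ * x := fun x => by ring
    simp only [div_eq_inv_mul]
    apply HasFDerivAt.const_mul
    apply HasFDerivAt.fun_sum
    intro j hj
    apply HasFDerivAt.const_mul
    apply HasFDerivAt.log
    · exact (((reL n (zeta N j)).hasFDerivAt (x := a)).mul
        ((reL n (zeta N j)).hasFDerivAt (x := a))).add
        ((((imL n (zeta N j)).hasFDerivAt (x := a)).mul
        ((imL n (zeta N j)).hasFDerivAt (x := a))))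
    · rw [reL_apply, imL_apply, ← Complex.normSq_apply]
      simpa [Complex.normSq_eq_zero] using ha j hj

lemma PPd_re {n : ℕ} (b : Fin (n + 1) → ℝ) (N : ℕ) (j : ℤ) :
    (PPd b (zeta N j)).re = Complex.normSq (evC b (zeta N j)) := by
  unfold PPd
  rw [evC_zeta_inv, Complex.mul_conj, Complex.ofReal_re]

lemma perj {n : ℕ} (b a : Fin (n + 1) → ℝ) (N : ℕ) (j : ℤ) (w : ℂ) :
    (PPd b (zeta N j)).re * ((Complex.normSq (evC a (zeta N j)))⁻¹ *
      ((evC a (zeta N j)).re * w.re + (evC a (zeta N j)).im * w.im)) =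
    Complex.normSq (evC b (zeta N j)) * (w / evC a (zeta N j)).re := by
  rw [PPd_re, Complex.div_re]
  ring

lemma re_div_2N (N : ℕ) (z : ℂ) : (z / (2 * (N : ℂ))).re = z.re / (2 * (N : ℝ)) := by
  rw [show (2 * (N : ℂ)) = ((2 * (N : ℝ) : ℝ) : ℂ) by push_cast; ring, Complex.div_ofReal_re]

lemma sum_b_zpow {n : ℕ} (b : Fin (n + 1) → ℝ) (N : ℕ) (j : ℤ) :
    (∑ k : Fin (n + 1), ((b k : ℂ) * zeta N j ^ (k.val : ℤ))) =
      (starRingEnd ℂ) (evC b (zeta N j)) := by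
  rw [← evC_zeta_inv]
  unfold evC
  refine Finset.sum_congr rfl fun k _ => ?_
  rw [_root_.zpow_neg, _root_.inv_zpow, inv_inv]

lemma Tgam_mulVec {n : ℕ} (N : ℕ) (b a : Fin (n + 1) → ℝ) (i : Fin (n + 1)) :
    (Tgam N b a).mulVec b i =
      (∑ j ∈ Idx N, Complex.normSq (evC b (zeta N j)) *
        (zeta N j ^ (-(i.val : ℤ)) / evC a (zeta N j)).re) / (2 * N) := by
  have key : (∑ k : Fin (n + 1),
      (∑ j ∈ Idx N, zeta N j ^ ((k.val : ℤ) - (i.val : ℤ)) * evC b (zeta N j) /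
          evC a (zeta N j)) * (b k : ℂ))
      = ∑ j ∈ Idx N, ((Complex.normSq (evC b (zeta N j)) : ℝ) : ℂ) *
          (zeta N j ^ (-(i.val : ℤ)) / evC a (zeta N j)) := by
    simp only [Finset.sum_mul]
    rw [Finset.sum_comm]
    refine Finset.sum_congr rfl fun j _ => ?_
    have h1 : ∀ k : Fin (n + 1),
        zeta N j ^ ((k.val : ℤ) - (i.val : ℤ)) * evC b (zeta N j) / evC a (zeta N j) * (b k : ℂ)
        = ((b k : ℂ) * zeta N j ^ (k.val : ℤ)) *
            (zeta N j ^ (-(i.val : ℤ)) * evC b (zeta N j) / evC a (zeta N j)) := by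
      intro k
      rw [show (k.val : ℤ) - (i.val : ℤ) = (k.val : ℤ) + (-(i.val : ℤ)) by ring,
        zpow_add₀ (zeta_ne_zero N j)]
      ring
    rw [Finset.sum_congr rfl fun k _ => h1 k, ← Finset.sum_mul, sum_b_zpow]
    have h2 : (starRingEnd ℂ) (evC b (zeta N j)) * evC b (zeta N j)
        = ((Complex.normSq (evC b (zeta N j)) : ℝ) : ℂ) := by
      rw [mul_comm, Complex.mul_conj]
    calc (starRingEnd ℂ) (evC b (zeta N j)) *
          (zeta N j ^ (-(i.val : ℤ)) * evC b (zeta N j) / evC a (zeta N j))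
        = ((starRingEnd ℂ) (evC b (zeta N j)) * evC b (zeta N j)) *
            (zeta N j ^ (-(i.val : ℤ)) / evC a (zeta N j)) := by ring
      _ = _ := by rw [h2]
  unfold Matrix.mulVec dotProduct Tgam gam
  calc (∑ k : Fin (n + 1),
        ((∑ j ∈ Idx N, zeta N j ^ ((k.val : ℤ) - (i.val : ℤ)) * evC b (zeta N j) /
            evC a (zeta N j)) / (2 * (N : ℂ))).re * b k)
      = (∑ k : Fin (n + 1),
          ((∑ j ∈ Idx N, zeta N j ^ ((k.val : ℤ) - (i.val : ℤ)) * evC b (zeta N j) /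
              evC a (zeta N j)) * (b k : ℂ)).re) / (2 * (N : ℝ)) := by
        rw [Finset.sum_div]
        refine Finset.sum_congr rfl fun k _ => ?_
        rw [re_div_2N]
        rw [Complex.mul_re]
        simp [Complex.ofReal_re, Complex.ofReal_im]
        ring
      _ = ((∑ k : Fin (n + 1),
          (∑ j ∈ Idx N, zeta N j ^ ((k.val : ℤ) - (i.val : ℤ)) * evC b (zeta N j) /
              evC a (zeta N j)) * (b k : ℂ)).re) / (2 * (N : ℝ)) := by
        rw [Complex.re_sum]
      _ = _ := by
        rw [key, Complex.re_sum]
        congr 1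
        refine Finset.sum_congr rfl fun j _ => ?_
        rw [Complex.re_ofReal_mul]

lemma evC_single {n : ℕ} (i : Fin (n + 1)) (z : ℂ) :
    evC (Pi.single i 1) z = z ^ (-(i.val : ℤ)) := by
  unfold evC
  rw [Finset.sum_eq_single i]
  · simp
  · intro k _ hk
    simp [Pi.single_apply, hk]
  · simp

lemma Toep_symm {n : ℕ} (c : Fin (n + 1) → ℝ) (p q : Fin (n + 1)) :
    Toep c p q = Toep c q p := by
  unfold Toep
  congr 1
  exact Fin.ext (by simp [max_comm])

lemma quad_eval {n : ℕ} (c : Fin (n + 1) → ℝ) (a : Fin (n + 1) → ℝ) (i : Fin (n + 1)) :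
    (∑ p : Fin (n + 1), ∑ q : Fin (n + 1),
        Toep c p q * (a p * ((Pi.single i 1 : Fin (n+1) → ℝ) q) + a q * ((Pi.single i 1 : Fin (n+1) → ℝ) p)))
      = 2 * (Toep c).mulVec a i := by
  have h1 : ∀ p : Fin (n + 1),
      (∑ q : Fin (n + 1), Toep c p q * (a p * ((Pi.single i 1 : Fin (n+1) → ℝ) q) + a q * ((Pi.single i 1 : Fin (n+1) → ℝ) p)))
      = Toep c p i * a p + ((Pi.single i 1 : Fin (n+1) → ℝ) p) * ∑ q : Fin (n + 1), Toep c p q * a q := by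
    intro p
    rw [Finset.sum_congr rfl (fun q _ => by
      show Toep c p q * (a p * ((Pi.single i 1 : Fin (n+1) → ℝ) q) + a q * ((Pi.single i 1 : Fin (n+1) → ℝ) p))
        = (if q = i then Toep c p q * a p else 0) + ((Pi.single i 1 : Fin (n+1) → ℝ) p) * (Toep c p q * a q)
      by_cases h : q = i <;> by_cases h2 : p = i <;> simp [Pi.single_apply, h, h2] <;> ring), Finset.sum_add_distrib,
      Finset.sum_ite_eq' Finset.univ i, ← Finset.mul_sum]
    simp
  rw [Finset.sum_congr rfl fun p _ => h1 p, Finset.sum_add_distrib]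
  have h2 : (∑ p : Fin (n + 1), ((Pi.single i 1 : Fin (n+1) → ℝ) p) * ∑ q : Fin (n + 1), Toep c p q * a q)
      = ∑ q : Fin (n + 1), Toep c i q * a q := by
    rw [Finset.sum_eq_single i]
    · simp
    · intro k _ hk; simp [Pi.single_apply, hk]
    · simp
  rw [h2]
  have h3 : (∑ p : Fin (n + 1), Toep c p i * a p) = ∑ q : Fin (n + 1), Toep c i q * a q :=
    Finset.sum_congr rfl fun p _ => by rw [Toep_symm]
  rw [h3]
  unfold Matrix.mulVec dotProduct
  ring

lemma grad_Jd (N : ℕ) {n : ℕ} (c b : Fin (n + 1) → ℝ) (a : Fin (n + 1) → ℝ)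
    (ha : ∀ j ∈ Idx N, evC a (zeta N j) ≠ 0) :
    gradVec (Jd N c b) a = fun i =>
      2 * ((Toep c).mulVec a i - (Tgam N b a).mulVec b i) := by
  funext i
  unfold gradVec
  rw [(hasFDerivAt_Jd N c b a ha).fderiv]
  simp only [ContinuousLinearMap.sub_apply, ContinuousLinearMap.smul_apply,
    ContinuousLinearMap.sum_apply, ContinuousLinearMap.add_apply, prj_apply,
    smul_eq_mul]
  rw [quad_eval]
  have hsum : ∀ j ∈ Idx N,
      (PPd b (zeta N j)).re *
        ((reL n (zeta N j) a * reL n (zeta N j) a + imL n (zeta N j) a * imL n (zeta N j) a)⁻¹ *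
          (reL n (zeta N j) a * reL n (zeta N j) (Pi.single i 1) +
              reL n (zeta N j) a * reL n (zeta N j) (Pi.single i 1) +
            (imL n (zeta N j) a * imL n (zeta N j) (Pi.single i 1) +
              imL n (zeta N j) a * imL n (zeta N j) (Pi.single i 1))))
      = 2 * (Complex.normSq (evC b (zeta N j)) *
          (zeta N j ^ (-(i.val : ℤ)) / evC a (zeta N j)).re) := by
    intro j hj
    have h := perj b a N j (zeta N j ^ (-(i.val : ℤ)))
    simp only [reL_apply, imL_apply, evC_single]
    rw [← h, Complex.normSq_apply]
    ring
  rw [Finset.sum_congr rfl hsum, ← Finset.mul_sum, Tgam_mulVec]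
  ring

/-- with `σ²(a) = (Σ_k c_k a_k)/(Σ_k γ_k(a) b_k)`, the iteration map
`a ↦ σ²(a) T_n⁻¹ T_γ(a) b` coincides with the scaled quasi-Newton step
`a ↦ σ²(a) [ a − ½ T_n⁻¹ ∇𝕁_P(a) ]`. -/
theorem stmt8 (N n : ℕ) (hn : 1 ≤ n) (hNn : n < N)
    (c b : Fin (n + 1) → ℝ) (hb0 : b 0 = 1) (hT : (Toep c).PosDef)
    (a : Fin (n + 1) → ℝ) (ha : ∀ j ∈ Idx N, evC a (zeta N j) ≠ 0)
    (hden : ∑ k : Fin (n + 1), gam N b a (k.val : ℤ) * b k ≠ 0) :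
    ((∑ k : Fin (n + 1), c k * a k) / (∑ k : Fin (n + 1), gam N b a (k.val : ℤ) * b k)) •
        ((Toep c)⁻¹.mulVec ((Tgam N b a).mulVec b)) =
      ((∑ k : Fin (n + 1), c k * a k) /
          (∑ k : Fin (n + 1), gam N b a (k.val : ℤ) * b k)) •
        (a - (1 / 2 : ℝ) • (Toep c)⁻¹.mulVec (gradVec (Jd N c b) a)) := by
  congr 1
  rw [grad_Jd N c b a ha]
  have hg : (fun i => 2 * ((Toep c).mulVec a i - (Tgam N b a).mulVec b i))
      = (2 : ℝ) • ((Toep c).mulVec a - (Tgam N b a).mulVec b) := by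
    funext i
    simp
  rw [hg, Matrix.mulVec_smul, smul_smul]
  norm_num
  have hsub : (Toep c)⁻¹.mulVec ((Toep c).mulVec a - (Tgam N b a).mulVec b)
      = (Toep c)⁻¹.mulVec ((Toep c).mulVec a) - (Toep c)⁻¹.mulVec ((Tgam N b a).mulVec b) := by
    rw [Matrix.mulVec_sub]
  rw [hsub, Matrix.mulVec_mulVec,
    Matrix.nonsing_inv_mul _ (isUnit_iff_ne_zero.mpr (ne_of_gt hT.det_pos)),
    Matrix.one_mulVec, sub_sub_cancel, ← Matrix.mulVec_mulVec]

end
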